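/- Let H = Σ_{j=0}^N c_j t^j |x|^{2N−2j} h(x) with h harmonic homogeneous of degree ν ≥ 1. Then the heat operator applied to H equals Σ_{j=1}^N t^{j−1}|x|^{2N−2j} h(x)[ j c_j − c_{j−1}(2N−2j+2)(n+2N−2j+2ν) ]. Consequently H solves the heat equation if and only if the coefficients satisfy the recurrence j c_j = c_{j−1}(2N−2j+2)(n+2N−2j+2ν) for 1 ≤ j ≤ N. -/

import Mathlib

/-- The Laplacian on ℝⁿ, as the sum of second partial derivatives. -/
noncomputable def lap {n : ℕ} (f : (Fin n → ℝ) → ℝ) (x : Fin n → ℝ) : ℝ :=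
  ∑ j, fderiv ℝ (fun y => fderiv ℝ f y (Pi.single j 1)) x (Pi.single j 1)

namespace HeatAux

open MvPolynomial

noncomputable def Dmap {n : ℕ} (p : MvPolynomial (Fin n) ℝ) (x : Fin n → ℝ) :
    (Fin n → ℝ) →L[ℝ] ℝ :=
  ∑ i, MvPolynomial.eval x (MvPolynomial.pderiv i p) • (ContinuousLinearMap.proj i : (Fin n → ℝ) →L[ℝ] ℝ)

lemma Dmap_apply {n : ℕ} (p : MvPolynomial (Fin n) ℝ) (x v : Fin n → ℝ) :
    Dmap p x v = ∑ i, MvPolynomial.eval x (MvPolynomial.pderiv i p) * v i := by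
  simp [Dmap, ContinuousLinearMap.sum_apply]

lemma Dmap_single {n : ℕ} (p : MvPolynomial (Fin n) ℝ) (x : Fin n → ℝ) (j : Fin n) :
    Dmap p x (Pi.single j 1) = MvPolynomial.eval x (MvPolynomial.pderiv j p) := by
  rw [Dmap_apply]
  rw [Finset.sum_eq_single j] <;> simp [Pi.single_apply]
  intro b hb; simp [Pi.single_apply, hb]

lemma hasFDerivAt_eval {n : ℕ} (p : MvPolynomial (Fin n) ℝ) (x : Fin n → ℝ) :
    HasFDerivAt (fun y => MvPolynomial.eval y p) (Dmap p x) x := by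
  induction p using MvPolynomial.induction_on with
  | C a =>
      simp only [eval_C]
      have : Dmap (C a : MvPolynomial (Fin n) ℝ) x = 0 := by
        simp [Dmap, pderiv_C]
      rw [this]; exact hasFDerivAt_const _ _
  | add p q hp hq =>
      have := hp.add hq
      simp only [map_add]
      refine this.congr_fderiv (Eq.symm ?_)
      simp only [Dmap, map_add, add_smul]
      rw [Finset.sum_add_distrib]
  | mul_X p i hp =>
      have hXi : HasFDerivAt (fun y : Fin n → ℝ => y i)
          (ContinuousLinearMap.proj i : (Fin n → ℝ) →L[ℝ] ℝ) x :=
        (ContinuousLinearMap.proj (R := ℝ) (φ := fun _ : Fin n => ℝ) i).hasFDerivAt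
      have := hp.mul hXi
      simp only [map_mul, eval_X]
      refine this.congr_fderiv (Eq.symm ?_)
      ext v
      simp only [Dmap_apply, ContinuousLinearMap.add_apply, ContinuousLinearMap.smul_apply,
        Dmap_apply, ContinuousLinearMap.proj_apply, smul_eq_mul]
      classical
      simp only [pderiv_mul, pderiv_X, map_add, map_mul, eval_X]
      simp only [add_mul]
      rw [Finset.sum_add_distrib, add_comm]
      congr 1
      · rw [Finset.sum_eq_single i]
        · simp
        · intro b _ hb; simp [Pi.single_apply, hb]
        · simp
      · rw [Finset.mul_sum]; apply Finset.sum_congr rfl; intro j _; ring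

noncomputable def LapP {n : ℕ} (p : MvPolynomial (Fin n) ℝ) : MvPolynomial (Fin n) ℝ :=
  ∑ i, MvPolynomial.pderiv i (MvPolynomial.pderiv i p)

lemma lap_eval {n : ℕ} (p : MvPolynomial (Fin n) ℝ) (x : Fin n → ℝ) :
    lap (fun y => MvPolynomial.eval y p) x = MvPolynomial.eval x (LapP p) := by
  unfold lap LapP
  rw [map_sum]
  apply Finset.sum_congr rfl
  intro j _
  have h1 : (fun y => fderiv ℝ (fun z => MvPolynomial.eval z p) y (Pi.single j 1))
      = fun y => MvPolynomial.eval y (MvPolynomial.pderiv j p) := by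
    funext y
    rw [(hasFDerivAt_eval p y).fderiv, Dmap_single]
  rw [h1, (hasFDerivAt_eval (MvPolynomial.pderiv j p) x).fderiv, Dmap_single]

lemma LapP_sum {n : ℕ} {ι : Type*} (s : Finset ι) (f : ι → MvPolynomial (Fin n) ℝ) :
    LapP (∑ j ∈ s, f j) = ∑ j ∈ s, LapP (f j) := by
  unfold LapP
  simp only [map_sum]
  exact Finset.sum_comm

lemma LapP_C_mul {n : ℕ} (a : ℝ) (p : MvPolynomial (Fin n) ℝ) :
    LapP (C a * p) = C a * LapP p := by
  unfold LapP
  rw [Finset.mul_sum]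
  apply Finset.sum_congr rfl
  intro i _
  rw [pderiv_C_mul, pderiv_C_mul]

lemma euler_id {n ν : ℕ} (h : MvPolynomial (Fin n) ℝ) (hhom : h.IsHomogeneous ν) :
    ∑ i, MvPolynomial.X i * MvPolynomial.pderiv i h = (ν : ℝ) • h := by
  classical
  conv_lhs => rw [h.as_sum]
  conv_rhs => rw [h.as_sum]
  simp only [map_sum, Finset.mul_sum, Finset.smul_sum]
  rw [Finset.sum_comm]
  apply Finset.sum_congr rfl
  intro d hd
  have hdeg : ∑ i, (d i : ℝ) = (ν : ℝ) := by
    have h2 := hhom (MvPolynomial.mem_support_iff.mp hd)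
    have h3 : (Finsupp.weight 1) d = ∑ i, d i := by
      rw [Finsupp.weight_apply, Finsupp.sum_fintype]
      · simp
      · simp
    rw [h3] at h2
    rw [← h2]
    push_cast
    rfl
  have key : ∀ i : Fin n, MvPolynomial.X i * MvPolynomial.pderiv i
      (MvPolynomial.monomial d (h.coeff d))
      = MvPolynomial.monomial d (h.coeff d * d i) := by
    intro i
    rw [pderiv_monomial]
    rcases Nat.eq_zero_or_pos (d i) with h0 | h0
    · simp [h0]
    · rw [X, monomial_mul, one_mul]
      have hE : Finsupp.single i 1 + (d - Finsupp.single i 1) = d := by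
        rw [add_comm]
        exact tsub_add_cancel_of_le (Finsupp.single_le_iff.mpr h0)
      rw [hE]
  rw [Finset.sum_congr rfl (fun i _ => key i), ← map_sum, MvPolynomial.smul_monomial]
  congr 1
  rw [← Finset.mul_sum, mul_comm]
  rw [hdeg, smul_eq_mul]

lemma euler_id' {n ν : ℕ} (h : MvPolynomial (Fin n) ℝ) (hhom : h.IsHomogeneous ν) :
    ∑ i, MvPolynomial.X i * MvPolynomial.pderiv i h = (ν : MvPolynomial (Fin n) ℝ) * h := by
  rw [euler_id h hhom, ← map_natCast (C : ℝ →+* MvPolynomial (Fin n) ℝ) ν,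
    MvPolynomial.smul_eq_C_mul]

noncomputable def sqP (n : ℕ) : MvPolynomial (Fin n) ℝ := ∑ i, X i ^ 2

lemma pderiv_natCast {n : ℕ} (i : Fin n) (k : ℕ) :
    MvPolynomial.pderiv i (k : MvPolynomial (Fin n) ℝ) = 0 := by
  rw [← map_natCast (C : ℝ →+* MvPolynomial (Fin n) ℝ) k]
  exact pderiv_C

lemma pderiv_ofNat {n : ℕ} (i : Fin n) :
    MvPolynomial.pderiv i (2 : MvPolynomial (Fin n) ℝ) = 0 := by
  have : (2 : MvPolynomial (Fin n) ℝ) = ((2 : ℕ) : MvPolynomial (Fin n) ℝ) := by norm_cast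
  rw [this, pderiv_natCast]

lemma pderiv_sqP {n : ℕ} (i : Fin n) : MvPolynomial.pderiv i (sqP n) = 2 * X i := by
  unfold sqP
  rw [map_sum]
  rw [Finset.sum_eq_single i]
  · rw [pderiv_pow, pderiv_X_self]; ring
  · intro b _ hb; rw [pderiv_pow, pderiv_X_of_ne hb]; ring
  · simp

lemma second_pderiv {n : ℕ} (h : MvPolynomial (Fin n) ℝ) (m : ℕ) (i : Fin n) :
    MvPolynomial.pderiv i (MvPolynomial.pderiv i (sqP n ^ (m+1) * h)) =
      ((4*(m+1)*m : ℕ) : MvPolynomial (Fin n) ℝ) * (sqP n ^ (m-1) * (X i ^ 2 * h))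
      + ((2*(m+1) : ℕ) : MvPolynomial (Fin n) ℝ) * (sqP n ^ m * h)
      + ((4*(m+1) : ℕ) : MvPolynomial (Fin n) ℝ) * (sqP n ^ m * (X i * MvPolynomial.pderiv i h))
      + sqP n ^ (m+1) * MvPolynomial.pderiv i (MvPolynomial.pderiv i h) := by
  simp only [pderiv_mul, pderiv_pow, pderiv_sqP, pderiv_natCast, pderiv_ofNat, pderiv_X_self,
    Nat.add_sub_cancel, map_add, mul_one, mul_zero, zero_mul, add_zero, zero_add]
  push_cast
  ring

lemma lapP_pow_mul {n ν : ℕ} (h : MvPolynomial (Fin n) ℝ) (hhom : h.IsHomogeneous ν)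
    (hh : LapP h = 0) (m : ℕ) :
    LapP (sqP n ^ (m+1) * h)
      = ((2*(m+1)*(n+2*m+2*ν) : ℕ) : MvPolynomial (Fin n) ℝ) * (sqP n ^ m * h) := by
  unfold LapP
  rw [Finset.sum_congr rfl (fun i _ => second_pderiv h m i)]
  simp only [Finset.sum_add_distrib]
  have e1 : ∑ i : Fin n, ((4*(m+1)*m : ℕ) : MvPolynomial (Fin n) ℝ) * (sqP n ^ (m-1) * (X i ^ 2 * h))
      = ((4*(m+1)*m : ℕ) : MvPolynomial (Fin n) ℝ) * ((sqP n ^ (m-1) * h) * sqP n) := by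
    rw [← Finset.mul_sum]
    congr 1
    conv_rhs => rw [sqP]
    rw [Finset.mul_sum]
    apply Finset.sum_congr rfl
    intro i _; rw [sqP]; ring
  have e2 : ∑ _i : Fin n, ((2*(m+1) : ℕ) : MvPolynomial (Fin n) ℝ) * (sqP n ^ m * h)
      = ((n : ℕ) : MvPolynomial (Fin n) ℝ) * (((2*(m+1) : ℕ) : MvPolynomial (Fin n) ℝ) * (sqP n ^ m * h)) := by
    rw [Finset.sum_const, Finset.card_univ, Fintype.card_fin, nsmul_eq_mul]
  have e3 : ∑ i : Fin n, ((4*(m+1) : ℕ) : MvPolynomial (Fin n) ℝ) * (sqP n ^ m * (X i * MvPolynomial.pderiv i h))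
      = ((4*(m+1) : ℕ) : MvPolynomial (Fin n) ℝ) * (sqP n ^ m * ((ν : MvPolynomial (Fin n) ℝ) * h)) := by
    rw [← Finset.mul_sum]
    congr 1
    rw [← euler_id' h hhom, Finset.mul_sum]
  have e4 : ∑ i : Fin n, sqP n ^ (m+1) * MvPolynomial.pderiv i (MvPolynomial.pderiv i h)
      = 0 := by
    rw [← Finset.mul_sum]
    have : ∑ i : Fin n, MvPolynomial.pderiv i (MvPolynomial.pderiv i h) = 0 := hh
    rw [this, mul_zero]
  rw [e1, e2, e3, e4, add_zero]
  rcases m with _ | l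
  · push_cast
    ring
  · have : sqP n ^ (l + 1 - 1) * h * sqP n = sqP n ^ (l+1) * h := by
      rw [Nat.add_sub_cancel]
      ring
    rw [this]
    push_cast
    ring

end HeatAux
open MvPolynomial HeatAux

/-- For H = Σ_{j=0}^N c_j t^j |x|^{2N−2j} h(x) with h a nonzero harmonic polynomial
homogeneous of degree ν ≥ 1, the heat operator applied to H equals
Σ_{j=1}^N t^{j−1}|x|^{2N−2j} h(x)[ j c_j − c_{j−1}(2N−2j+2)(n+2N−2j+2ν) ]; consequently
H solves the heat equation iff j c_j = c_{j−1}(2N−2j+2)(n+2N−2j+2ν) for 1 ≤ j ≤ N. -/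
theorem heat_polynomial_recurrence (n ν N : ℕ) (hn : 1 ≤ n) (hν : 1 ≤ ν) (hN : 1 ≤ N)
    (h : MvPolynomial (Fin n) ℝ) (hne : h ≠ 0) (hhom : h.IsHomogeneous ν)
    (hharm : ∀ x : Fin n → ℝ, lap (fun y => MvPolynomial.eval y h) x = 0)
    (c : ℕ → ℝ) :
    (∀ (x : Fin n → ℝ) (t : ℝ),
      deriv (fun s => ∑ j ∈ Finset.range (N + 1),
          c j * s ^ j * (∑ i, x i ^ 2) ^ (N - j) * MvPolynomial.eval x h) t
        - lap (fun y => ∑ j ∈ Finset.range (N + 1),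
            c j * t ^ j * (∑ i, y i ^ 2) ^ (N - j) * MvPolynomial.eval y h) x
      = ∑ j ∈ Finset.Icc 1 N,
          t ^ (j - 1) * (∑ i, x i ^ 2) ^ (N - j) * MvPolynomial.eval x h
            * ((j : ℝ) * c j
                - c (j - 1) * (2 * (N : ℝ) - 2 * j + 2) * ((n : ℝ) + 2 * N - 2 * j + 2 * ν)))
    ∧ ((∀ (x : Fin n → ℝ) (t : ℝ),
        deriv (fun s => ∑ j ∈ Finset.range (N + 1),
            c j * s ^ j * (∑ i, x i ^ 2) ^ (N - j) * MvPolynomial.eval x h) t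
          - lap (fun y => ∑ j ∈ Finset.range (N + 1),
              c j * t ^ j * (∑ i, y i ^ 2) ^ (N - j) * MvPolynomial.eval y h) x = 0)
      ↔ (∀ j : ℕ, 1 ≤ j → j ≤ N →
          (j : ℝ) * c j
            = c (j - 1) * (2 * (N : ℝ) - 2 * j + 2) * ((n : ℝ) + 2 * N - 2 * j + 2 * ν))) := by
  classical
  -- harmonicity at the polynomial level
  have hLh : LapP h = 0 := by
    apply MvPolynomial.funext
    intro x
    rw [map_zero, ← lap_eval]
    exact hharm x
  -- the time derivative
  have hderiv : ∀ (x : Fin n → ℝ) (t : ℝ),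
      deriv (fun s => ∑ j ∈ Finset.range (N + 1),
          c j * s ^ j * (∑ i, x i ^ 2) ^ (N - j) * MvPolynomial.eval x h) t
      = ∑ j ∈ Finset.range (N + 1),
          c j * ((j : ℝ) * t ^ (j - 1)) * ((∑ i, x i ^ 2) ^ (N - j) * MvPolynomial.eval x h) := by
    intro x t
    have hd : ∀ j ∈ Finset.range (N + 1),
        HasDerivAt (fun s : ℝ => c j * s ^ j * (∑ i, x i ^ 2) ^ (N - j) * MvPolynomial.eval x h)
          (c j * ((j : ℝ) * t ^ (j - 1)) * ((∑ i, x i ^ 2) ^ (N - j) * MvPolynomial.eval x h)) t := by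
      intro j _
      have h1 := ((hasDerivAt_pow j t).const_mul (c j)).mul_const ((∑ i, x i ^ 2) ^ (N - j))
      have h2 := h1.mul_const (MvPolynomial.eval x h)
      exact h2.congr_deriv (by ring)
    exact (HasDerivAt.fun_sum hd).deriv
  -- the Laplacian
  have hsq : ∀ y : Fin n → ℝ, MvPolynomial.eval y (sqP n) = ∑ i, y i ^ 2 := by
    intro y; simp [sqP]
  have hlap : ∀ (x : Fin n → ℝ) (t : ℝ),
      lap (fun y => ∑ j ∈ Finset.range (N + 1),
          c j * t ^ j * (∑ i, y i ^ 2) ^ (N - j) * MvPolynomial.eval y h) x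
      = ∑ j ∈ Finset.range N,
          c j * t ^ j * (((2*(N-j)*(n+2*(N-1-j)+2*ν) : ℕ) : ℝ)
            * ((∑ i, x i ^ 2) ^ (N-1-j) * MvPolynomial.eval x h)) := by
    intro x t
    have hfun : (fun y => ∑ j ∈ Finset.range (N + 1),
          c j * t ^ j * (∑ i, y i ^ 2) ^ (N - j) * MvPolynomial.eval y h)
        = fun y => MvPolynomial.eval y
            (∑ j ∈ Finset.range (N + 1), C (c j * t ^ j) * (sqP n ^ (N - j) * h)) := by
      funext y
      rw [map_sum]
      apply Finset.sum_congr rfl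
      intro j _
      rw [eval_mul, eval_C, eval_mul, eval_pow, hsq]
      ring
    rw [hfun, lap_eval]
    have hLsum : LapP (∑ j ∈ Finset.range (N + 1), C (c j * t ^ j) * (sqP n ^ (N - j) * h))
        = ∑ j ∈ Finset.range N, C (c j * t ^ j)
            * (((2*(N-j)*(n+2*(N-1-j)+2*ν) : ℕ) : MvPolynomial (Fin n) ℝ)
              * (sqP n ^ (N-1-j) * h)) := by
      rw [LapP_sum, Finset.sum_range_succ]
      have hlast : LapP (C (c N * t ^ N) * (sqP n ^ (N - N) * h)) = 0 := by
        rw [Nat.sub_self, pow_zero, one_mul, LapP_C_mul, hLh, mul_zero]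
      rw [hlast, add_zero]
      apply Finset.sum_congr rfl
      intro j hj
      have hj' : j < N := Finset.mem_range.mp hj
      have hNj : N - j = (N - 1 - j) + 1 := by omega
      rw [hNj, LapP_C_mul, lapP_pow_mul h hhom hLh]
    rw [hLsum, map_sum]
    apply Finset.sum_congr rfl
    intro j _
    rw [eval_mul, eval_C, eval_mul, eval_mul, eval_pow, hsq, map_natCast]
  -- the key identity (part 1)
  have key : ∀ (x : Fin n → ℝ) (t : ℝ),
      deriv (fun s => ∑ j ∈ Finset.range (N + 1),
          c j * s ^ j * (∑ i, x i ^ 2) ^ (N - j) * MvPolynomial.eval x h) t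
        - lap (fun y => ∑ j ∈ Finset.range (N + 1),
            c j * t ^ j * (∑ i, y i ^ 2) ^ (N - j) * MvPolynomial.eval y h) x
      = ∑ j ∈ Finset.Icc 1 N,
          t ^ (j - 1) * (∑ i, x i ^ 2) ^ (N - j) * MvPolynomial.eval x h
            * ((j : ℝ) * c j
                - c (j - 1) * (2 * (N : ℝ) - 2 * j + 2) * ((n : ℝ) + 2 * N - 2 * j + 2 * ν)) := by
    intro x t
    rw [hderiv, hlap]
    have hIcc : ∀ (f : ℕ → ℝ), ∑ j ∈ Finset.Icc 1 N, f j = ∑ j ∈ Finset.range N, f (j+1) := by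
      intro f
      rw [← Finset.Ico_add_one_right_eq_Icc, Finset.sum_Ico_eq_sum_range]
      apply Finset.sum_congr rfl
      intro j _
      rw [add_comm]
    rw [hIcc]
    rw [Finset.sum_range_succ']
    simp only [Nat.cast_zero, zero_mul, mul_zero, zero_mul, add_zero]
    rw [← Finset.sum_sub_distrib]
    apply Finset.sum_congr rfl
    intro j hj
    have hj' : j < N := Finset.mem_range.mp hj
    have e1 : j + 1 - 1 = j := by omega
    have e2 : N - (j + 1) = N - 1 - j := by omega
    rw [e1, e2]
    have c1 : ((N - j : ℕ) : ℝ) = (N : ℝ) - j := Nat.cast_sub (by omega)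
    have c2 : ((N - 1 - j : ℕ) : ℝ) = (N : ℝ) - 1 - j := by
      rw [Nat.cast_sub (by omega : j ≤ N - 1), Nat.cast_sub (by omega : 1 ≤ N), Nat.cast_one]
    push_cast [c1, c2]
    ring
  refine ⟨key, ?_, ?_⟩
  · -- forward direction
    intro H
    have H' : ∀ (x : Fin n → ℝ) (t : ℝ),
        ∑ j ∈ Finset.Icc 1 N,
          t ^ (j - 1) * (∑ i, x i ^ 2) ^ (N - j) * MvPolynomial.eval x h
            * ((j : ℝ) * c j
                - c (j - 1) * (2 * (N : ℝ) - 2 * j + 2) * ((n : ℝ) + 2 * N - 2 * j + 2 * ν)) = 0 := by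
      intro x t
      rw [← key x t]
      exact H x t
    obtain ⟨x0, hx0⟩ : ∃ x : Fin n → ℝ, MvPolynomial.eval x h ≠ 0 := by
      by_contra hcon
      push_neg at hcon
      exact hne (MvPolynomial.funext fun x => by rw [hcon x, map_zero])
    have hx0ne : x0 ≠ 0 := by
      intro h0
      apply hx0
      rw [h0]
      show (MvPolynomial.eval (0 : Fin n → ℝ)) h = 0
      rw [MvPolynomial.eval_zero, MvPolynomial.constantCoeff_eq]
      apply hhom.coeff_eq_zero
      simp only [map_zero]
      omega
    have hS : 0 < ∑ i, x0 i ^ 2 := by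
      obtain ⟨i, hi⟩ := Function.ne_iff.mp hx0ne
      apply Finset.sum_pos' (fun i _ => sq_nonneg _)
      exact ⟨i, Finset.mem_univ i, lt_of_le_of_ne (sq_nonneg _) (Ne.symm (pow_ne_zero 2 hi))⟩
    intro j hj1 hjN
    set E : ℕ → ℝ := fun j => (j : ℝ) * c j
        - c (j - 1) * (2 * (N : ℝ) - 2 * j + 2) * ((n : ℝ) + 2 * N - 2 * j + 2 * ν) with hE
    set Q : Polynomial ℝ := ∑ j ∈ Finset.Icc 1 N,
        Polynomial.C ((∑ i, x0 i ^ 2) ^ (N - j) * MvPolynomial.eval x0 h * E j)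
          * Polynomial.X ^ (j - 1) with hQ
    have hQ0 : Q = 0 := by
      apply Polynomial.zero_of_eval_zero
      intro t
      rw [hQ]
      rw [Polynomial.eval_finset_sum]
      have := H' x0 t
      rw [← this]
      apply Finset.sum_congr rfl
      intro j _
      rw [Polynomial.eval_mul, Polynomial.eval_C, Polynomial.eval_pow, Polynomial.eval_X]
      ring
    have hcoeff : Q.coeff (j - 1)
        = (∑ i, x0 i ^ 2) ^ (N - j) * MvPolynomial.eval x0 h * E j := by
      rw [hQ, Polynomial.finset_sum_coeff]
      rw [Finset.sum_eq_single j]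
      · rw [Polynomial.coeff_C_mul, Polynomial.coeff_X_pow, if_pos rfl, mul_one]
      · intro b hb hbj
        rw [Polynomial.coeff_C_mul, Polynomial.coeff_X_pow, if_neg, mul_zero]
        have hb' := Finset.mem_Icc.mp hb
        omega
      · intro hjmem
        exact absurd (Finset.mem_Icc.mpr ⟨hj1, hjN⟩) hjmem
    rw [hQ0, Polynomial.coeff_zero] at hcoeff
    have hEj : E j = 0 := by
      have hpow : (∑ i, x0 i ^ 2) ^ (N - j) ≠ 0 := pow_ne_zero _ hS.ne'
      have := hcoeff.symm
      rcases mul_eq_zero.mp this with h1 | h1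
      · rcases mul_eq_zero.mp h1 with h2 | h2
        · exact absurd h2 hpow
        · exact absurd h2 hx0
      · exact h1
    rw [hE] at hEj
    have := sub_eq_zero.mp hEj
    linarith [this]
  · -- backward direction
    intro hrec x t
    rw [key x t]
    apply Finset.sum_eq_zero
    intro j hj
    obtain ⟨hj1, hjN⟩ := Finset.mem_Icc.mp hj
    rw [hrec j hj1 hjN, sub_self, mul_zero]
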